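/- The tropical ideal I = trop(⟨x − y⟩) ⊆ R̄[x,y] obtained by tropicalizing the ideal generated by x − y over a trivially valued field is not finitely generated as an ideal of the semiring R̄[x,y]. -/

import Mathlib

open MvPolynomial

/-- The tropical semiring `ℝ ∪ {∞}` with `⊕ = min` and `⊙ = +`. -/
abbrev TropR : Type := Tropical (WithTop ℝ)

/-- Tropicalization of a polynomial over a trivially valued field: every nonzero
coefficient is replaced by `trop(0) = 1` (the tropical multiplicative unit) and the
operations are interpreted tropically. -/
noncomputable def tropPoly (g : MvPolynomial (Fin 2) ℚ) : MvPolynomial (Fin 2) TropR :=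
  ∑ u ∈ g.support, monomial u 1

/-- The tropicalization `trop(J)` of an ideal `J ⊆ K[x,y]`: the ideal of `R̄[x,y]`
generated by the tropicalizations of all elements of `J`. -/
noncomputable def tropIdeal (J : Ideal (MvPolynomial (Fin 2) ℚ)) :
    Ideal (MvPolynomial (Fin 2) TropR) :=
  Ideal.span (tropPoly '' (J : Set (MvPolynomial (Fin 2) ℚ)))

/-! ### Auxiliary material -/

/-- Total degree of an exponent vector on two variables. -/
def degS (u : Fin 2 →₀ ℕ) : ℕ := u 0 + u 1

lemma degS_add (a b : Fin 2 →₀ ℕ) : degS (a + b) = degS a + degS b := by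
  simp [degS]; ring

lemma degS_sum_eq (u : Fin 2 →₀ ℕ) : (u.sum fun _ n => n) = degS u := by
  rw [Finsupp.sum_fintype _ _ fun _ => rfl, Fin.sum_univ_two]; rfl

/-- In the tropical semiring, a sum is zero only if all terms are zero
(there is no cancellation). -/
lemma TropR.eq_zero_of_sum_eq_zero {ι : Type*} {s : Finset ι} {f : ι → TropR}
    (h : ∑ i ∈ s, f i = 0) : ∀ i ∈ s, f i = 0 := by
  classical
  induction s using Finset.cons_induction with
  | empty => intro i hi; simp at hi
  | cons a s ha ih =>
    rw [Finset.sum_cons] at h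
    obtain ⟨h1, h2⟩ := Tropical.add_eq_zero_iff.mp h
    intro i hi
    rcases Finset.mem_cons.mp hi with rfl | hi
    · exact h1
    · exact ih h2 i hi

lemma TropR.add_ne_zero_left {a b : TropR} (h : a ≠ 0) : a + b ≠ 0 :=
  fun h0 => h (Tropical.add_eq_zero_iff.mp h0).1

lemma TropR.add_ne_zero_right {a b : TropR} (h : b ≠ 0) : a + b ≠ 0 :=
  fun h0 => h (Tropical.add_eq_zero_iff.mp h0).2

lemma TropR.one_ne_zero' : (1 : TropR) ≠ 0 := by
  intro h
  have := congrArg Tropical.untrop h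
  simp only [Tropical.untrop_one, Tropical.untrop_zero] at this
  exact (WithTop.coe_ne_top (a := (0 : ℝ))) (by exact_mod_cast this)

lemma coeff_tropPoly (g : MvPolynomial (Fin 2) ℚ) (u : Fin 2 →₀ ℕ) :
    coeff u (tropPoly g) = if u ∈ g.support then 1 else 0 := by
  classical
  rw [tropPoly, coeff_sum]
  simp only [coeff_monomial]
  exact Finset.sum_ite_eq' g.support u fun _ => 1

lemma mem_support_tropPoly (g : MvPolynomial (Fin 2) ℚ) (u : Fin 2 →₀ ℕ) :
    u ∈ (tropPoly g).support ↔ u ∈ g.support := by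
  rw [mem_support_iff, coeff_tropPoly]
  by_cases h : u ∈ g.support <;> simp [h, TropR.one_ne_zero']

/-- Support pairing property with respect to a relation on exponent vectors. -/
def PairProp (Rel : (Fin 2 →₀ ℕ) → (Fin 2 →₀ ℕ) → Prop)
    (p : MvPolynomial (Fin 2) TropR) : Prop :=
  ∀ u ∈ p.support, ∃ u' ∈ p.support, Rel u u'

lemma PairProp.add {Rel} {p q : MvPolynomial (Fin 2) TropR}
    (hp : PairProp Rel p) (hq : PairProp Rel q) : PairProp Rel (p + q) := by
  intro u hu
  rw [mem_support_iff, coeff_add] at hu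
  have h : coeff u p ≠ 0 ∨ coeff u q ≠ 0 := by
    by_contra h
    push_neg at h
    rw [h.1, h.2, add_zero] at hu
    exact hu rfl
  rcases h with h | h
  · obtain ⟨u', hu', hR⟩ := hp u (mem_support_iff.mpr h)
    refine ⟨u', ?_, hR⟩
    rw [mem_support_iff, coeff_add]
    exact TropR.add_ne_zero_left (mem_support_iff.mp hu')
  · obtain ⟨u', hu', hR⟩ := hq u (mem_support_iff.mpr h)
    refine ⟨u', ?_, hR⟩
    rw [mem_support_iff, coeff_add]
    exact TropR.add_ne_zero_right (mem_support_iff.mp hu')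

lemma PairProp.mul {Rel} (hR : ∀ a w w', Rel w w' → Rel (a + w) (a + w'))
    (q : MvPolynomial (Fin 2) TropR) {p : MvPolynomial (Fin 2) TropR}
    (hp : PairProp Rel p) : PairProp Rel (q * p) := by
  classical
  intro u hu
  rw [mem_support_iff, coeff_mul] at hu
  obtain ⟨x, hx, hne⟩ := Finset.exists_ne_zero_of_sum_ne_zero hu
  have hq1 : coeff x.1 q ≠ 0 := left_ne_zero_of_mul hne
  have hp2 : coeff x.2 p ≠ 0 := right_ne_zero_of_mul hne
  obtain ⟨w', hw', hRel⟩ := hp x.2 (mem_support_iff.mpr hp2)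
  have hxu : x.1 + x.2 = u := Finset.HasAntidiagonal.mem_antidiagonal.mp hx
  refine ⟨x.1 + w', ?_, ?_⟩
  · rw [mem_support_iff, coeff_mul]
    intro h0
    have := TropR.eq_zero_of_sum_eq_zero h0 (x.1, w')
      (Finset.HasAntidiagonal.mem_antidiagonal.mpr rfl)
    exact mul_ne_zero hq1 (mem_support_iff.mp hw') this
  · rw [← hxu]
    exact hR x.1 x.2 w' hRel

lemma pairProp_span {Rel} (hR : ∀ a w w', Rel w w' → Rel (a + w) (a + w'))
    {S : Set (MvPolynomial (Fin 2) TropR)} (hS : ∀ s ∈ S, PairProp Rel s)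
    {p : MvPolynomial (Fin 2) TropR} (hp : p ∈ Ideal.span S) : PairProp Rel p := by
  induction hp using Submodule.span_induction with
  | mem s hs => exact hS s hs
  | zero => intro u hu; simp at hu
  | add p q _ _ hp hq => exact PairProp.add hp hq
  | smul c p _ hp => rw [smul_eq_mul]; exact PairProp.mul hR c hp

/-- For `g` in the ideal generated by `x - y` over `ℚ`, every monomial of `g` is
accompanied by another monomial of the same total degree. -/
lemma pair_of_mem_span {g : MvPolynomial (Fin 2) ℚ}
    (hg : g ∈ Ideal.span {X 0 - X 1}) {u : Fin 2 →₀ ℕ} (hu : u ∈ g.support) :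
    ∃ u' ∈ g.support, u' ≠ u ∧ degS u' = degS u := by
  classical
  by_contra hcon
  push_neg at hcon
  have hψ : (aeval fun _ : Fin 2 => (Polynomial.X : Polynomial ℚ)) g = 0 := by
    obtain ⟨h, rfl⟩ := Ideal.mem_span_singleton.mp hg
    rw [map_mul, map_sub, aeval_X, aeval_X, sub_self, zero_mul]
  have hform : (aeval fun _ : Fin 2 => (Polynomial.X : Polynomial ℚ)) g
      = ∑ w ∈ g.support, Polynomial.C (coeff w g) * Polynomial.X ^ (degS w) := by
    conv_lhs => rw [g.as_sum]
    rw [map_sum]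
    refine Finset.sum_congr rfl fun w _ => ?_
    rw [aeval_monomial, Finsupp.prod_pow, Fin.prod_univ_two, ← pow_add]
    rfl
  have hc : Polynomial.coeff ((aeval fun _ : Fin 2 => (Polynomial.X : Polynomial ℚ)) g)
      (degS u) = coeff u g := by
    rw [hform, Polynomial.finset_sum_coeff]
    have : ∀ w ∈ g.support,
        (Polynomial.C (coeff w g) * Polynomial.X ^ (degS w)).coeff (degS u)
          = if degS u = degS w then coeff w g else 0 := by
      intro w _
      rw [Polynomial.coeff_C_mul, Polynomial.coeff_X_pow, mul_boole]
    rw [Finset.sum_congr rfl this, Finset.sum_eq_single u]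
    · simp
    · intro w hw hwne
      simp [Ne.symm (hcon w hw hwne)]
    · intro h; exact absurd hu h
  rw [hψ, Polynomial.coeff_zero] at hc
  exact mem_support_iff.mp hu hc.symm

/-- **Tropical ideals need not be finitely generated.**  The tropical ideal
`trop(⟨x − y⟩) ⊆ R̄[x,y]`, the tropicalization of the ideal generated by `x − y` over a
trivially valued field, is not finitely generated as an ideal of `R̄[x,y]`. -/
theorem tropIdeal_span_sub_not_fg :
    ¬ (tropIdeal (Ideal.span {X 0 - X 1})).FG := by
  classical
  rintro ⟨S, hspan⟩
  set D : ℕ := (S.sup totalDegree) + 1 with hDdef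
  -- the pairing relation in the same total degree
  set RelP : (Fin 2 →₀ ℕ) → (Fin 2 →₀ ℕ) → Prop :=
    fun u u' => u' ≠ u ∧ degS u' = degS u with hRelP
  have hRP : ∀ a w w', RelP w w' → RelP (a + w) (a + w') := by
    rintro a w w' ⟨h1, h2⟩
    exact ⟨fun h => h1 (add_left_cancel h), by rw [degS_add, degS_add, h2]⟩
  -- every element of the tropical ideal has paired supports
  have hIP : ∀ p ∈ tropIdeal (Ideal.span {X 0 - X 1}), PairProp RelP p := by
    intro p hp
    refine pairProp_span hRP ?_ hp
    rintro s ⟨g, hg, rfl⟩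
    intro u hu
    rw [mem_support_tropPoly] at hu
    obtain ⟨u', hu', h1, h2⟩ := pair_of_mem_span hg hu
    exact ⟨u', (mem_support_tropPoly g u').mpr hu', h1, h2⟩
  -- the bounded pairing relation
  set RelQ : (Fin 2 →₀ ℕ) → (Fin 2 →₀ ℕ) → Prop :=
    fun u u' => u' ≠ u ∧ ∃ v : Fin 2 →₀ ℕ,
      (∀ i, v i ≤ u i) ∧ (∀ i, v i ≤ u' i) ∧ degS u < D + degS v with hRelQ
  have hRQ : ∀ a w w', RelQ w w' → RelQ (a + w) (a + w') := by
    rintro a w w' ⟨h1, v, hv1, hv2, hv3⟩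
    refine ⟨fun h => h1 (add_left_cancel h), a + v, ?_, ?_, ?_⟩
    · intro i; simp only [Finsupp.add_apply]; exact Nat.add_le_add_left (hv1 i) _
    · intro i; simp only [Finsupp.add_apply]; exact Nat.add_le_add_left (hv2 i) _
    · rw [degS_add, degS_add]; omega
  -- the generators in `S` satisfy the bounded pairing property
  have hSQ : ∀ s ∈ (S : Set (MvPolynomial (Fin 2) TropR)), PairProp RelQ s := by
    intro s hs
    have hsI : s ∈ tropIdeal (Ideal.span {X 0 - X 1}) := by
      rw [← hspan]; exact Ideal.subset_span hs
    intro u hu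
    obtain ⟨u', hu', h1, _⟩ := hIP s hsI u hu
    refine ⟨u', hu', h1, 0, fun i => Nat.zero_le _, fun i => Nat.zero_le _, ?_⟩
    have hle : degS u ≤ s.totalDegree := by
      rw [← degS_sum_eq]; exact le_totalDegree hu
    have hsup : s.totalDegree ≤ S.sup totalDegree := Finset.le_sup hs
    have h0 : degS (0 : Fin 2 →₀ ℕ) = 0 := by simp [degS]
    omega
  -- hence every element of the ideal satisfies the bounded pairing property
  have hQ : ∀ p ∈ Ideal.span (S : Set (MvPolynomial (Fin 2) TropR)), PairProp RelQ p :=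
    fun p hp => pairProp_span hRQ hSQ hp
  -- the witness polynomial `x^D ⊕ y^D`
  set g : MvPolynomial (Fin 2) ℚ := (X 0) ^ D - (X 1) ^ D with hgdef
  have hgJ : g ∈ Ideal.span ({X 0 - X 1} : Set (MvPolynomial (Fin 2) ℚ)) :=
    Ideal.mem_span_singleton.mpr (sub_dvd_pow_sub_pow _ _ D)
  have hmem : tropPoly g ∈ Ideal.span (S : Set (MvPolynomial (Fin 2) TropR)) := by
    rw [hspan]
    exact Ideal.subset_span ⟨g, hgJ, rfl⟩
  have hD1 : 1 ≤ D := Nat.le_add_left 1 _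
  have hs01 : Finsupp.single (0 : Fin 2) D ≠ Finsupp.single (1 : Fin 2) D := by
    intro h
    have := DFunLike.congr_fun h (0 : Fin 2)
    simp [Finsupp.single_apply] at this
  have hcoeffg : ∀ u, coeff u g =
      (if Finsupp.single (0 : Fin 2) D = u then (1 : ℚ) else 0)
        - (if Finsupp.single (1 : Fin 2) D = u then (1 : ℚ) else 0) := by
    intro u
    rw [hgdef, coeff_sub, coeff_X_pow, coeff_X_pow]
  have hs0 : Finsupp.single (0 : Fin 2) D ∈ g.support := by
    rw [mem_support_iff, hcoeffg]
    simp only [if_pos rfl, if_neg (Ne.symm hs01), sub_zero]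
    norm_num
  have hsub : ∀ u ∈ g.support,
      u = Finsupp.single (0 : Fin 2) D ∨ u = Finsupp.single (1 : Fin 2) D := by
    intro u hu
    by_contra h
    push_neg at h
    rw [mem_support_iff, hcoeffg] at hu
    simp [Ne.symm h.1, Ne.symm h.2] at hu
  -- derive the contradiction
  obtain ⟨u', hu', hne, v, hv1, hv2, hv3⟩ :=
    hQ (tropPoly g) hmem (Finsupp.single (0 : Fin 2) D)
      ((mem_support_tropPoly g _).mpr hs0)
  rw [mem_support_tropPoly] at hu'
  have hu'eq : u' = Finsupp.single (1 : Fin 2) D := by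
    rcases hsub u' hu' with h | h
    · exact absurd h hne
    · exact h
  have hvz1 : v 1 = 0 := by
    have := hv1 1
    simpa [Finsupp.single_apply, Nat.le_zero] using this
  have hvz0 : v 0 = 0 := by
    have := hv2 0
    rw [hu'eq] at this
    simpa [Finsupp.single_apply, Nat.le_zero] using this
  have hdegv : degS v = 0 := by simp [degS, hvz0, hvz1]
  have hdegu : degS (Finsupp.single (0 : Fin 2) D) = D := by
    simp [degS, Finsupp.single_apply]
  omega
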